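/- Esakia's lemma: Let X be an Esakia space and F a down-directed (under inclusion) family of nonempty closed subsets of X. Then ↓(⋂ F) = ⋂ {↓F : F ∈ F}. -/
import Mathlib


/-- Esakia's lemma: in an Esakia space, for a down-directed family `𝓕` of nonempty
closed subsets, `↓(⋂ 𝓕) = ⋂ {↓F : F ∈ 𝓕}`. -/
theorem esakia_lemma
    {X : Type*} [TopologicalSpace X] [PartialOrder X] [CompactSpace X] [T2Space X]
    (hzd : TopologicalSpace.IsTopologicalBasis {s : Set X | IsClopen s})
    (hpries : ∀ x y : X, ¬ x ≤ y →
      ∃ U : Set X, IsClopen U ∧ IsUpperSet U ∧ x ∈ U ∧ y ∉ U)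
    (hdown : ∀ U : Set X, IsOpen U → IsOpen {x : X | ∃ u ∈ U, x ≤ u})
    (hup : ∀ x : X, IsClosed (Set.Ici x))
    (𝓕 : Set (Set X))
    (hne : ∀ F ∈ 𝓕, F.Nonempty) (hcl : ∀ F ∈ 𝓕, IsClosed F)
    (hdir : ∀ F ∈ 𝓕, ∀ G ∈ 𝓕, ∃ H ∈ 𝓕, H ⊆ F ∧ H ⊆ G) :
    {x : X | ∃ s ∈ ⋂₀ 𝓕, x ≤ s} = ⋂ F ∈ 𝓕, {x : X | ∃ s ∈ F, x ≤ s} := by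
  ext x
  simp only [Set.mem_setOf_eq, Set.mem_iInter]
  constructor
  · rintro ⟨s, hs, hxs⟩ F hF
    exact ⟨s, hs F hF, hxs⟩
  · intro hx
    rcases Set.eq_empty_or_nonempty 𝓕 with h𝓕 | h𝓕
    · refine ⟨x, ?_, le_refl x⟩
      simp [h𝓕]
    · haveI : Nonempty 𝓕 := h𝓕.to_subtype
      have key : (⋂ F : 𝓕, ((F : Set X) ∩ Set.Ici x)).Nonempty := by
        apply IsCompact.nonempty_iInter_of_directed_nonempty_isCompact_isClosed
        · rintro ⟨F, hF⟩ ⟨G, hG⟩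
          obtain ⟨H, hH, hHF, hHG⟩ := hdir F hF G hG
          exact ⟨⟨H, hH⟩, Set.inter_subset_inter_left _ hHF,
            Set.inter_subset_inter_left _ hHG⟩
        · rintro ⟨F, hF⟩
          obtain ⟨s, hs, hxs⟩ := hx F hF
          exact ⟨s, hs, hxs⟩
        · rintro ⟨F, hF⟩
          exact ((hcl F hF).inter (hup x)).isCompact
        · rintro ⟨F, hF⟩
          exact (hcl F hF).inter (hup x)
      obtain ⟨s, hs⟩ := key
      simp only [Set.mem_iInter, Set.mem_inter_iff, Set.mem_Ici] at hs
      refine ⟨s, ?_, (hs ⟨_, h𝓕.choose_spec⟩).2⟩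
      intro F hF
      exact (hs ⟨F, hF⟩).1
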